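/- Let n ≥ 1 and let f : I^n → ℝ be differentiable at every point of I^n and not affine, i.e. there are no c ∈ ℝ^n and b ∈ ℝ with f(x) = ⟨c, x⟩ + b for all x ∈ I^n. Then the union of the affine tangent hyperplanes of the graph of f, the set {(a, f(x) + Df(x)(a − x)) : x ∈ I^n, a ∈ ℝ^n} ⊆ ℝ^n × ℝ, has nonempty interior. -/

import Mathlib

open Real

/-- The open cube (−π, π)^n in ℝ^n. -/
def Icube (n : ℕ) : Set (EuclideanSpace ℝ (Fin n)) :=
  {x | ∀ i, x i ∈ Set.Ioo (-π) π}

lemma icube_open (n : ℕ) : IsOpen (Icube n) := by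
  have : Icube n = ⋂ i, (fun x : EuclideanSpace ℝ (Fin n) => x i) ⁻¹' Set.Ioo (-π) π := by
    ext x; simp [Icube]
  rw [this]
  exact isOpen_iInter_of_finite fun i => isOpen_Ioo.preimage ((continuous_apply i).comp (PiLp.continuous_ofLp 2 _))

lemma icube_convex (n : ℕ) : Convex ℝ (Icube n) := by
  intro x hx y hy a b ha hb hab i
  have := (convex_Ioo (-π) π) (hx i) (hy i) ha hb hab
  simpa [PiLp.add_apply, PiLp.smul_apply, smul_eq_mul] using this

/-- if f : I^n → ℝ is differentiable everywhere on I^n and not affine,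
then the union of the affine tangent hyperplanes of its graph has nonempty interior. -/
theorem stmt_10 (n : ℕ) (hn : 1 ≤ n) (f : EuclideanSpace ℝ (Fin n) → ℝ)
    (Df : EuclideanSpace ℝ (Fin n) → (EuclideanSpace ℝ (Fin n) →L[ℝ] ℝ))
    (hf : ∀ x ∈ Icube n, HasFDerivAt f (Df x) x)
    (hnonaff : ¬ ∃ (c : EuclideanSpace ℝ (Fin n)) (b : ℝ),
      ∀ x ∈ Icube n, f x = (inner ℝ c x : ℝ) + b) :
    (interior {p : EuclideanSpace ℝ (Fin n) × ℝ |
        ∃ x ∈ Icube n, ∃ a : EuclideanSpace ℝ (Fin n),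
          p = (a, f x + Df x (a - x))}).Nonempty := by
  classical
  have hπ : (0 : ℝ) < π := Real.pi_pos
  have h0 : (0 : EuclideanSpace ℝ (Fin n)) ∈ Icube n := by
    intro i
    constructor <;> simp [neg_lt_zero, hπ]
  -- Step 1: find two points where the tangent plane at x₀ misses the graph at x₁
  obtain ⟨x₀, hx₀, x₁, hx₁, hδne⟩ :
      ∃ x₀ ∈ Icube n, ∃ x₁ ∈ Icube n, f x₁ ≠ f x₀ + Df x₀ (x₁ - x₀) := by
    by_contra h
    push_neg at h
    refine hnonaff ⟨(InnerProductSpace.toDual ℝ _).symm (Df 0), f 0, fun x hx => ?_⟩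
    have hx' := h 0 h0 x hx
    rw [hx', InnerProductSpace.toDual_symm_apply]
    simp [add_comm]
  set A : EuclideanSpace ℝ (Fin n) → ℝ := fun a => f x₀ + Df x₀ (a - x₀) with hAdef
  have hAc : Continuous A :=
    continuous_const.add ((Df x₀).continuous.comp (continuous_id.sub continuous_const))
  have hfc : ContinuousAt f x₁ := (hf x₁ hx₁).continuousAt
  set δ : ℝ := f x₁ - A x₁ with hδdef
  have hδ0 : δ ≠ 0 := sub_ne_zero.2 hδne
  set ε : ℝ := |δ| / 4 with hεdef
  have habs : 0 < |δ| := abs_pos.2 hδ0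
  have hε : 0 < ε := by positivity
  have h1 : ∀ᶠ a in nhds x₁, |f a - f x₁| < ε :=
    hfc.eventually (eventually_abs_sub_lt (f x₁) hε)
  have h2 : ∀ᶠ a in nhds x₁, |A a - A x₁| < ε :=
    hAc.continuousAt.eventually (eventually_abs_sub_lt (A x₁) hε)
  have h3 : ∀ᶠ a in nhds x₁, a ∈ Icube n := (icube_open n).mem_nhds hx₁
  obtain ⟨r, hr0, hrball⟩ := Metric.eventually_nhds_iff_ball.1 ((h1.and h2).and h3)
  set c : ℝ := (f x₁ + A x₁) / 2 with hcdef
  -- the candidate open set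
  set V : Set (EuclideanSpace ℝ (Fin n) × ℝ) :=
    Metric.ball x₁ r ×ˢ Set.Ioo (c - ε / 2) (c + ε / 2) with hVdef
  have hVopen : IsOpen V := Metric.isOpen_ball.prod isOpen_Ioo
  have hVmem : (x₁, c) ∈ V := by
    refine ⟨Metric.mem_ball_self hr0, ?_, ?_⟩ <;> [linarith; linarith]
  -- key inclusion
  have hVsub : V ⊆ {p : EuclideanSpace ℝ (Fin n) × ℝ |
      ∃ x ∈ Icube n, ∃ a : EuclideanSpace ℝ (Fin n), p = (a, f x + Df x (a - x))} := by
    rintro ⟨a, t⟩ ⟨ha, ht1, ht2⟩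
    obtain ⟨⟨hfa, hAa⟩, hacube⟩ := hrball a ha
    obtain ⟨ht1, ht2⟩ : c - ε / 2 < t ∧ t < c + ε / 2 := ⟨ht1, ht2⟩
    -- t lies strictly between A a and f a
    have hc1 : f x₁ = c + δ / 2 := by rw [hcdef, hδdef]; ring
    have hc2 : A x₁ = c - δ / 2 := by rw [hcdef, hδdef]; ring
    have h1' := abs_lt.1 hfa
    have h2' := abs_lt.1 hAa
    clear_value A δ c ε
    have hbetween : (A a < t ∧ t < f a) ∨ (f a < t ∧ t < A a) := by
      rcases lt_or_gt_of_ne hδ0 with hneg | hpos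
      · have habsδ : |δ| = -δ := abs_of_neg hneg
        rw [hεdef, habsδ] at ht1 ht2 h1' h2'
        right
        constructor <;> linarith [h1'.1, h1'.2, h2'.1, h2'.2]
      · have habsδ : |δ| = δ := abs_of_pos hpos
        rw [hεdef, habsδ] at ht1 ht2 h1' h2'
        left
        constructor <;> linarith [h1'.1, h1'.2, h2'.1, h2'.2]
    -- the segment from x₀ to a
    set v : EuclideanSpace ℝ (Fin n) := a - x₀ with hvdef
    set γ : ℝ → EuclideanSpace ℝ (Fin n) := fun s => x₀ + s • v with hγdef
    set U : Set ℝ := γ ⁻¹' Icube n with hUdef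
    have hγc : Continuous γ := continuous_const.add (continuous_id.smul continuous_const)
    have hUopen : IsOpen U := (icube_open n).preimage hγc
    have hU01 : Set.Icc (0 : ℝ) 1 ⊆ U := by
      intro s hs
      have hmem := (icube_convex n) hx₀ hacube (a := 1 - s) (b := s)
        (by linarith [hs.2]) hs.1 (by ring)
      have : γ s = (1 - s) • x₀ + s • a := by
        simp only [hγdef, hvdef, smul_sub, sub_smul, one_smul]
        abel
      rw [hUdef]; simp only [Set.mem_preimage, this]
      exact hmem
    set g : ℝ → ℝ := fun s => f (γ s) with hgdef
    set g' : ℝ → ℝ := fun s => Df (γ s) v with hg'def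
    have hγd : ∀ s : ℝ, HasDerivAt γ v s := by
      intro s
      have := ((hasDerivAt_id s).smul_const v).const_add x₀
      simpa [hγdef] using this
    have hg : ∀ s ∈ U, HasDerivAt g (g' s) s := fun s hs =>
      (hf (γ s) hs).comp_hasDerivAt s (hγd s)
    have hgc : ContinuousOn g U := fun s hs => ((hg s hs).continuousAt).continuousWithinAt
    -- antiderivative Φ of T
    set T : ℝ → ℝ := fun s => g s + (1 - s) * g' s with hTdef
    set Φ : ℝ → ℝ := fun s => 2 * (∫ u in (0 : ℝ)..s, g u) + (1 - s) * g s with hΦdef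
    have hΦd : ∀ s ∈ Set.Icc (0 : ℝ) 1, HasDerivAt Φ (T s) s := by
      intro s hs
      have hG : HasDerivAt (fun u => ∫ w in (0 : ℝ)..u, g w) (g s) s := by
        apply intervalIntegral.integral_hasDerivAt_right
        · apply ContinuousOn.intervalIntegrable
          apply hgc.mono
          intro u hu
          apply hU01
          rcases hu with hu
          rw [Set.uIcc_of_le hs.1] at hu
          exact ⟨hu.1, hu.2.trans hs.2⟩
        · exact hgc.stronglyMeasurableAtFilter hUopen s (hU01 hs)
        · exact (hg s (hU01 hs)).continuousAt
      have h2' : HasDerivAt (fun u => (1 - u) * g u) ((-1) * g s + (1 - s) * g' s) s :=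
        (((hasDerivAt_id s).const_sub 1)).mul (hg s (hU01 hs))
      have := (hG.const_mul (2 : ℝ)).add h2'
      rw [show T s = 2 * g s + (-1 * g s + (1 - s) * g' s) by
        show g s + (1 - s) * g' s = _; ring]
      exact this
    have hT0 : T 0 = A a := by
      have hγ0 : γ 0 = x₀ := by simp [hγdef]
      simp [hTdef, hgdef, hg'def, hγ0, hAdef, hvdef]
    have hT1 : T 1 = f a := by
      have hγ1 : γ 1 = a := by simp [hγdef, hvdef]
      simp [hTdef, hgdef, hγ1]
    -- Darboux: find s with T s = t
    have hDW : ∀ s ∈ Set.Icc (0 : ℝ) 1, HasDerivWithinAt Φ (T s) (Set.Icc (0 : ℝ) 1) s :=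
      fun s hs => (hΦd s hs).hasDerivWithinAt
    have hex : ∃ s ∈ Set.Ioo (0 : ℝ) 1, T s = t := by
      rcases hbetween with ⟨hl, hr⟩ | ⟨hl, hr⟩
      · obtain ⟨s, hs, hTs⟩ := exists_hasDerivWithinAt_eq_of_gt_of_lt (by norm_num : (0:ℝ) ≤ 1)
          hDW (by rw [hT0]; exact hl) (by rw [hT1]; exact hr)
        exact ⟨s, hs, hTs⟩
      · obtain ⟨s, hs, hTs⟩ := exists_hasDerivWithinAt_eq_of_lt_of_gt (by norm_num : (0:ℝ) ≤ 1)
          hDW (by rw [hT0]; exact hr) (by rw [hT1]; exact hl)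
        exact ⟨s, hs, hTs⟩
    obtain ⟨s, hs, hTs⟩ := hex
    refine ⟨γ s, hU01 (Set.mem_Icc_of_Ioo hs), a, ?_⟩
    have hsub : a - γ s = (1 - s) • v := by
      simp only [hγdef, hvdef, smul_sub, sub_smul, one_smul]
      abel
    have : f (γ s) + Df (γ s) (a - γ s) = T s := by
      rw [hsub, map_smul]
      simp only [hTdef, hgdef, hg'def, smul_eq_mul]
    rw [this, hTs]
  exact ⟨(x₁, c), interior_maximal hVsub hVopen hVmem⟩
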